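/- Every real algebraic number field L (a finite extension of ℚ inside ℝ) contains a Pisot–Vijayaraghavan number that generates L over ℚ; i.e., there is an algebraic integer λ ∈ L with L = ℚ(λ), λ > 1, and all Galois conjugates of λ other than λ itself have absolute value strictly less than 1. -/

import Mathlib

open NumberField NumberField.InfinitePlace NumberField.mixedEmbedding Module Polynomial
open scoped IntermediateField NNReal

/-- Auxiliary Minkowski-type construction: in any number field of degree at least 2 with a
distinguished real place `w₀`, there is a nonzero algebraic integer that is a primitive element,
is `> 1` in absolute value at `w₀`, and is `< 1` at all other places. -/
theorem exists_pisot_aux (K : Type*) [Field K] [NumberField K]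
    (w₀ : InfinitePlace K) (hw₀ : IsReal w₀) (hrank : 1 < finrank ℚ K) :
    ∃ x : 𝓞 K, IntermediateField.adjoin ℚ {(x : K)} = ⊤ ∧ 1 < w₀ (x : K) ∧
      ∀ w : InfinitePlace K, w ≠ w₀ → w (x : K) < 1 := by
  classical
  obtain ⟨B, hB⟩ : ∃ B : ℕ, minkowskiBound K 1 < (convexBodyLTFactor K) * B := by
    conv => congr; ext; rw [mul_comm]
    exact ENNReal.exists_nat_mul_gt (ENNReal.coe_ne_zero.mpr (convexBodyLTFactor_ne_zero K))
      (ne_of_lt (minkowskiBound_lt_top K 1))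
  have hf : ∀ w : InfinitePlace K, w ≠ w₀ → (fun _ : InfinitePlace K => (1/2 : ℝ≥0)) w ≠ 0 := by
    intro w _; norm_num
  obtain ⟨g, h_geqf, h_gprod⟩ := adjust_f K B hf
  obtain ⟨x, h_nz, h_le⟩ := exists_ne_zero_mem_ringOfIntegers_lt K (f := g)
    (by rw [convexBodyLT_volume]; convert hB; exact congr_arg ENNReal.ofNNReal h_gprod)
  have hx_ne : (x : K) ≠ 0 := RingOfIntegers.coe_ne_zero_iff.mpr h_nz
  have hlt : ∀ w : InfinitePlace K, w ≠ w₀ → w (x : K) < 1/2 := by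
    intro w hw
    have h := h_le w
    rw [h_geqf w hw] at h
    simpa using h
  have hlt1 : ∀ ⦃w : InfinitePlace K⦄, w ≠ w₀ → w (x : K) < 1 := fun w hw =>
    (hlt w hw).trans (by norm_num)
  have hprim : ℚ⟮(x : K)⟯ = ⊤ :=
    NumberField.is_primitive_element_of_infinitePlace_lt h_nz hlt1 (Or.inl hw₀)
  -- there exists a place different from w₀
  obtain ⟨w₁, hw₁⟩ : ∃ w₁ : InfinitePlace K, w₁ ≠ w₀ := by
    by_contra h
    push_neg at h
    have hs := sum_mult_eq (K := K)
    have huniv : (Finset.univ : Finset (InfinitePlace K)) = {w₀} := by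
      ext w; simp [h w]
    rw [huniv, Finset.sum_singleton, mult, if_pos hw₀] at hs
    omega
  have h1 : (1 : ℝ) ≤ ∏ w : InfinitePlace K, w (x : K) ^ mult w := by
    rw [prod_eq_abs_norm, ← Algebra.coe_norm_int]
    have := Int.one_le_abs (Algebra.norm_ne_zero_iff.mpr h_nz)
    exact_mod_cast this
  have hprod_nonneg : (0 : ℝ) ≤ ∏ w ∈ Finset.univ.erase w₀, w (x : K) ^ mult w :=
    Finset.prod_nonneg fun w _ => pow_nonneg (apply_nonneg _ _) _
  have hprod : ∏ w ∈ Finset.univ.erase w₀, w (x : K) ^ mult w < 1 := by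
    rw [show (1 : ℝ) = ∏ _w ∈ Finset.univ.erase w₀, (1 : ℝ) from (Finset.prod_const_one).symm]
    refine Finset.prod_lt_prod_of_nonempty (fun w _ => ?_) (fun w hw => ?_)
      ⟨w₁, Finset.mem_erase.2 ⟨hw₁, Finset.mem_univ _⟩⟩
    · exact pow_pos (pos_iff.mpr hx_ne) _
    · exact pow_lt_one₀ (apply_nonneg _ _) (hlt1 (Finset.ne_of_mem_erase hw))
        (by rw [mult]; split_ifs <;> norm_num)
  have hw₀x : 1 < w₀ (x : K) := by
    rw [← Finset.mul_prod_erase _ _ (Finset.mem_univ w₀), mult, if_pos hw₀, pow_one] at h1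
    nlinarith [(pos_iff (w := w₀)).mpr hx_ne, apply_nonneg w₀ (x : K)]
  exact ⟨x, hprim, hw₀x, fun w hw => hlt1 hw⟩

/-- Every real algebraic number field L contains a Pisot–Vijayaraghavan number that is a
primitive element: an algebraic integer λ ∈ L with λ > 1, ℚ(λ) = L, and all conjugates of
λ (complex roots of its minimal polynomial) other than λ itself of modulus < 1. -/
theorem exists_pisot_primitive_element (L : IntermediateField ℚ ℝ)
    [FiniteDimensional ℚ L] :
    ∃ lam : ℝ, lam ∈ L ∧ IsIntegral ℤ lam ∧ 1 < lam ∧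
      IntermediateField.adjoin ℚ {lam} = L ∧
      ∀ z : ℂ, Polynomial.aeval z (minpoly ℚ lam) = 0 → z ≠ (lam : ℂ) →
        ‖z‖ < 1 := by
  haveI : NumberField L := ⟨⟩
  by_cases hr : finrank ℚ L = 1
  · -- degenerate case L = ℚ: take lam = 2
    have hbot : L = ⊥ := IntermediateField.finrank_eq_one_iff.mp hr
    have h2L : (2 : ℝ) ∈ L := by
      have := add_mem L.one_mem L.one_mem
      norm_num at this
      norm_num
    refine ⟨2, h2L, ?_, one_lt_two, ?_, ?_⟩
    · have : IsIntegral ℤ (algebraMap ℤ ℝ 2) := isIntegral_algebraMap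
      simpa using this
    · rw [hbot]
      refine le_antisymm (IntermediateField.adjoin_le_iff.mpr ?_) bot_le
      intro t ht
      rw [Set.mem_singleton_iff] at ht
      subst ht
      exact IntermediateField.mem_bot.mpr ⟨2, by norm_num⟩
    · intro z hz hne
      have hm : minpoly ℚ (2 : ℝ) = X - C (2 : ℚ) := by
        rw [show (2 : ℝ) = algebraMap ℚ ℝ 2 by norm_num]
        exact minpoly.eq_X_sub_C ℝ (2 : ℚ)
      rw [hm] at hz
      simp only [map_sub, aeval_X, aeval_C] at hz
      have : z = 2 := by
        have := sub_eq_zero.mp hz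
        simpa using this
      exact absurd (by rw [this]; push_cast; ring) hne
  · have hrank : 1 < finrank ℚ L := lt_of_le_of_ne (Nat.one_le_iff_ne_zero.mpr
      (Module.finrank_pos).ne') (Ne.symm hr)
    -- the real place coming from the inclusion L ⊆ ℝ
    set φ₀ : L →+* ℂ := Complex.ofRealHom.comp (algebraMap L ℝ) with hφ₀def
    have hφ₀real : ComplexEmbedding.IsReal φ₀ := by
      rw [ComplexEmbedding.isReal_iff]
      ext a
      exact Complex.conj_ofReal _
    set w₀ : InfinitePlace L := InfinitePlace.mk φ₀ with hw₀def
    have hw₀ : IsReal w₀ := isReal_mk_iff.mpr hφ₀real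
    obtain ⟨x, hx_prim, hx_gt, hx_lt⟩ := exists_pisot_aux L w₀ hw₀ hrank
    -- fix the sign
    obtain ⟨y, hy_prim, hy_gt, hy_lt, hy_pos⟩ : ∃ y : 𝓞 L,
        IntermediateField.adjoin ℚ {(y : L)} = ⊤ ∧ 1 < w₀ (y : L) ∧
          (∀ w : InfinitePlace L, w ≠ w₀ → w (y : L) < 1) ∧ 0 ≤ ((y : L) : ℝ) := by
      by_cases hpos : 0 ≤ ((x : L) : ℝ)
      · exact ⟨x, hx_prim, hx_gt, hx_lt, hpos⟩
      · have hneg : ((-x : 𝓞 L) : L) = -(x : L) := by push_cast; ring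
        refine ⟨-x, ?_, ?_, ?_, ?_⟩
        · rw [hneg, eq_top_iff, ← hx_prim, IntermediateField.adjoin_simple_le_iff]
          have := IntermediateField.mem_adjoin_simple_self ℚ (-(x : L))
          have h2 := neg_mem this
          simpa using h2
        · rw [hneg]
          rw [show w₀ (-(x : L)) = w₀ (x : L) from w₀.1.map_neg _]
          exact hx_gt
        · intro w hw
          rw [hneg, show w (-(x : L)) = w (x : L) from w.1.map_neg _]
          exact hx_lt w hw
        · rw [hneg]
          push_cast
          linarith [lt_of_not_ge hpos]
    set α : L := (y : L) with hαdef
    refine ⟨(α : ℝ), SetLike.coe_mem α, ?_, ?_, ?_, ?_⟩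
    · have h1 : IsIntegral ℤ α := RingOfIntegers.isIntegral_coe y
      have h2 := h1.map (IsScalarTower.toAlgHom ℤ L ℝ)
      simpa using h2
    · have habs : w₀ α = |(α : ℝ)| := by
        rw [hw₀def, InfinitePlace.apply, hφ₀def]
        simp
      rw [habs, abs_of_nonneg hy_pos] at hy_gt
      exact hy_gt
    · have := IntermediateField.lift_adjoin_simple ℚ L α
      rw [← this]
      convert IntermediateField.lift_top (F := ℚ) (K := L) using 2 <;> exact hy_prim
    · intro z hz hne
      have hmin : minpoly ℚ ((α : ℝ)) = minpoly ℚ α :=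
        minpoly.algHom_eq L.val Subtype.val_injective α
      rw [hmin] at hz
      have hzroot : z ∈ (minpoly ℚ α).rootSet ℂ :=
        Polynomial.mem_rootSet.mpr ⟨minpoly.ne_zero (IsIntegral.of_finite ℚ α), hz⟩
      obtain ⟨φ, hφz⟩ : ∃ φ : L →+* ℂ, φ α = z := by
        have := (NumberField.Embeddings.range_eval_eq_rootSet_minpoly L ℂ α).symm ▸ hzroot
        exact this
      have hφne : φ ≠ φ₀ := by
        intro h
        apply hne
        rw [← hφz, h, hφ₀def]
        rfl
      have hmkne : InfinitePlace.mk φ ≠ w₀ := by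
        intro h
        rw [hw₀def, mk_eq_iff] at h
        rcases h with h | h
        · exact hφne h
        · apply hφne
          have : ComplexEmbedding.conjugate (ComplexEmbedding.conjugate φ) = φ := by
            ext a; simp [ComplexEmbedding.conjugate]
          rw [← this, h]
          exact hφ₀real
      have : ‖z‖ = (InfinitePlace.mk φ) α := by
        rw [InfinitePlace.apply, hφz]
      rw [this]
      exact hy_lt _ hmkne
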